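/- Let F be a finite extension of ℚ_p with ring of integers O_F and uniformizer π, let V be a free O_F-module of finite rank with valuation ν defined via a basis, and let ⟨,⟩ : V_F × V_F → F be a symmetric F-bilinear pairing on V_F = V ⊗ F. Define, for a subspace V₁ ⊆ V_F, d(V₁) = min{ ν(Y) : Y ∈ V₁, ⟨Z,Y⟩ ∈ O_F for all Z ∈ V }, and d = max over subspaces V₁ of d(V₁). If d ≤ 0 (depth at most zero), then every Y ∈ V_F with ν(Y) ≥ 0 satisfies ⟨Z, Y⟩ ∈ O_F for all Z ∈ V. -/

import Mathlib

open scoped Classical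

/-- Let `F/ℚ_p` be finite, `O` its ring of integers, `π` a uniformizer,
`ν` the normalized valuation, extended to a vector space `W` coordinatewise via an
`O`-basis `b` of the lattice `V = {x | all coordinates in O}`.  Let `B` be a symmetric
(non-degenerate) `F`-bilinear pairing on `W`.  For a nonzero subspace `V₁ ⊆ W` let
`dV V₁ = min { ν Y : Y ∈ V₁, ⟨Z,Y⟩ ∈ O for all Z ∈ V }` and let `d` be the maximum of
the `dV V₁`.  If `d ≤ 0`, then every `Y` with `ν Y ≥ 0` pairs integrally with the
lattice: `B Z Y ∈ O` for all `Z ∈ V`. -/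
theorem stmt_4 {p : ℕ} [Fact p.Prime] (F : Type*) [Field F] [Algebra ℚ_[p] F]
    [FiniteDimensional ℚ_[p] F]
    (O : Subring F) (π : F) (hπ0 : π ≠ 0) (hπO : π ∈ O)
    (ν : F → ℤ) (hνπ : ν π = 1)
    (hνmul : ∀ x y : F, x ≠ 0 → y ≠ 0 → ν (x * y) = ν x + ν y)
    (hνO : ∀ x : F, x ≠ 0 → (x ∈ O ↔ 0 ≤ ν x))
    (dim : ℕ) (W : Type*) [AddCommGroup W] [Module F W]
    (b : Module.Basis (Fin dim) F W)
    (νW : W → WithTop ℤ)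
    (hνW : ∀ x : W, νW x = Finset.univ.inf fun i =>
        if b.repr x i = 0 then (⊤ : WithTop ℤ) else (ν (b.repr x i) : WithTop ℤ))
    (B : W →ₗ[F] W →ₗ[F] F)
    (hsymm : ∀ x y : W, B x y = B y x)
    (hnondeg : ∀ x : W, (∀ y : W, B x y = 0) → x = 0)
    -- `Int Y` := `Y` pairs integrally with the lattice `V`
    (Int : W → Prop)
    (hInt : ∀ Y : W, Int Y ↔ ∀ Z : W, (∀ i, b.repr Z i ∈ O) → B Z Y ∈ O)
    -- `dV V₁` is the minimum of `νW` over integral elements of `V₁`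
    (dV : Submodule F W → ℤ)
    (hdVmin : ∀ V₁ : Submodule F W, V₁ ≠ ⊥ →
        (∃ Y ∈ V₁, Int Y ∧ νW Y = (dV V₁ : WithTop ℤ)) ∧
          ∀ Y ∈ V₁, Int Y → (dV V₁ : WithTop ℤ) ≤ νW Y)
    -- `d` is the maximum of the `dV V₁`
    (d : ℤ)
    (hdmax : (∀ V₁ : Submodule F W, V₁ ≠ ⊥ → dV V₁ ≤ d) ∧
        ∃ V₁ : Submodule F W, V₁ ≠ ⊥ ∧ dV V₁ = d)
    (hd0 : d ≤ 0) :
    ∀ Y : W, (0 : WithTop ℤ) ≤ νW Y → Int Y := by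
  intro Y hY
  by_cases hY0 : Y = 0
  · rw [hInt]
    intro Z hZ
    rw [hY0, map_zero]
    exact O.zero_mem
  have hbot : Submodule.span F {Y} ≠ ⊥ := by
    simpa [Submodule.span_singleton_eq_bot] using hY0
  obtain ⟨⟨Y', hY'mem, hY'Int, hY'ν⟩, -⟩ := hdVmin _ hbot
  obtain ⟨c, rfl⟩ := Submodule.mem_span_singleton.mp hY'mem
  have hdle : dV (Submodule.span F {Y}) ≤ 0 := le_trans (hdmax.1 _ hbot) hd0
  have hc0 : c ≠ 0 := by
    rintro rfl
    rw [zero_smul, hνW] at hY'ν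
    simp at hY'ν
  -- ν 1 = 0
  have hν1 : ν (1 : F) = 0 := by
    have h := hνmul 1 1 one_ne_zero one_ne_zero
    rw [mul_one] at h
    omega
  -- Fin dim is nonempty
  have hne : (Finset.univ : Finset (Fin dim)).Nonempty := by
    by_contra h
    rw [Finset.not_nonempty_iff_eq_empty] at h
    rw [hνW, h, Finset.inf_empty] at hY'ν
    exact (WithTop.coe_ne_top (hY'ν.symm))
  rw [hνW] at hY'ν
  obtain ⟨i, -, hi⟩ := (Finset.inf_le_iff (WithTop.coe_lt_top _)).mp (le_of_eq hY'ν)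
  have hrepr : b.repr (c • Y) i = c * b.repr Y i := by
    simp [map_smul]
  by_cases hri : b.repr Y i = 0
  · rw [if_pos (by rw [hrepr, hri, mul_zero])] at hi
    simp at hi
  have hcri : b.repr (c • Y) i ≠ 0 := by
    rw [hrepr]
    exact mul_ne_zero hc0 hri
  rw [if_neg hcri] at hi
  have hi' : ν (c * b.repr Y i) ≤ dV (Submodule.span F {Y}) := by
    rw [hrepr] at hi
    exact_mod_cast hi
  rw [hνmul c _ hc0 hri] at hi'
  -- 0 ≤ ν (b.repr Y i) from hY
  have hYi : (0 : ℤ) ≤ ν (b.repr Y i) := by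
    rw [hνW] at hY
    have h2 := Finset.le_inf_iff.mp hY i (Finset.mem_univ i)
    rw [if_neg hri] at h2
    exact_mod_cast h2
  have hc_le : ν c ≤ 0 := by omega
  -- c⁻¹ ∈ O
  have hcinv0 : c⁻¹ ≠ 0 := inv_ne_zero hc0
  have hνcinv : ν c⁻¹ = -ν c := by
    have h := hνmul c c⁻¹ hc0 hcinv0
    rw [mul_inv_cancel₀ hc0, hν1] at h
    omega
  have hcinvO : c⁻¹ ∈ O := (hνO _ hcinv0).mpr (by omega)
  rw [hInt]
  intro Z hZ
  have h1 : B Z (c • Y) ∈ O := (hInt _).mp hY'Int Z hZ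
  have heq : B Z Y = c⁻¹ * B Z (c • Y) := by
    rw [map_smul, smul_eq_mul, ← mul_assoc, inv_mul_cancel₀ hc0, one_mul]
  rw [heq]
  exact O.mul_mem hcinvO h1
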